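/- Let φ : S_6 → S_6 be an outer automorphism, and let T be a subgroup of S_6 of order 120. Then exactly one of T and φ(T) has a fixed point in {0,...,5} (a point stabilized by every element of the subgroup). -/

import Mathlib

open Equiv Equiv.Perm

set_option maxRecDepth 100000

abbrev G6 := Equiv.Perm (Fin 6)


lemma mulAut_mem_alternating (ψ : MulAut G6) {x : G6} (hx : x ∈ alternatingGroup (Fin 6)) :
    ψ x ∈ alternatingGroup (Fin 6) := by
  have h1 : (alternatingGroup (Fin 6)).map ψ.toMonoidHom ≤ alternatingGroup (Fin 6) := by
    rw [← Equiv.Perm.closure_three_cycles_eq_alternating, MonoidHom.map_closure]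
    apply Subgroup.closure_le _ |>.mpr
    rintro y ⟨c, hc, rfl⟩
    have h3 : (ψ.toMonoidHom c) ^ 3 = 1 := by
      rw [← map_pow]
      have : c ^ 3 = 1 := by
        have := hc.orderOf
        rw [← this]; exact pow_orderOf_eq_one c
      rw [this, map_one]
    have hs : (Equiv.Perm.sign (ψ.toMonoidHom c)) ^ 3 = 1 := by
      rw [← map_pow, h3, map_one]
    rw [Equiv.Perm.closure_three_cycles_eq_alternating, SetLike.mem_coe, Equiv.Perm.mem_alternatingGroup]
    rcases Int.units_eq_one_or (Equiv.Perm.sign (ψ.toMonoidHom c)) with h | h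
    · exact h
    · exfalso; rw [h] at hs; exact absurd hs (by decide)
  exact h1 ⟨x, hx, rfl⟩

lemma sign_mulAut (ψ : MulAut G6) (x : G6) : Equiv.Perm.sign (ψ x) = Equiv.Perm.sign x := by
  rcases Int.units_eq_one_or (Equiv.Perm.sign x) with h | h
  · rw [h, ← Equiv.Perm.mem_alternatingGroup]
    exact mulAut_mem_alternating ψ (Equiv.Perm.mem_alternatingGroup.mpr h)
  · rw [h]
    rcases Int.units_eq_one_or (Equiv.Perm.sign (ψ x)) with h2 | h2
    · exfalso
      have : x ∈ alternatingGroup (Fin 6) := by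
        have := mulAut_mem_alternating ψ.symm (Equiv.Perm.mem_alternatingGroup.mpr h2)
        simpa using this
      rw [Equiv.Perm.mem_alternatingGroup, h] at this
      norm_num at this
    · exact h2

lemma invol_replicate {u : G6} (h2 : u * u = 1) (h1 : u ≠ 1) :
    u.cycleType = Multiset.replicate (Multiset.card u.cycleType) 2 ∧
      2 * Multiset.card u.cycleType = u.support.card := by
  have hord : orderOf u = 2 := by
    apply orderOf_eq_prime _ h1
    rw [pow_two]; exact h2
  have hall : ∀ n ∈ u.cycleType, n = 2 := by
    intro n hn
    have hdvd : n ∣ 2 := by rw [← hord]; exact Equiv.Perm.dvd_of_mem_cycleType hn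
    have h2le : 2 ≤ n := Equiv.Perm.two_le_of_mem_cycleType hn
    have := Nat.le_of_dvd (by norm_num) hdvd
    omega
  have hrep : u.cycleType = Multiset.replicate (Multiset.card u.cycleType) 2 :=
    (Multiset.eq_replicate_card).mpr hall
  refine ⟨hrep, ?_⟩
  have := Equiv.Perm.sum_cycleType u
  rw [hrep] at this
  rw [Multiset.sum_replicate, smul_eq_mul, mul_comm] at this
  rw [← this]

lemma isSwap_of_invol {u : G6} (h2 : u * u = 1) (h1 : u ≠ 1)
    (hsign : Equiv.Perm.sign u = -1) (hfix : ∃ i, u i = i) : u.IsSwap := by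
  obtain ⟨hrep, hsum⟩ := invol_replicate h2 h1
  set k := Multiset.card u.cycleType with hk
  have hsgn : Equiv.Perm.sign u = (-1 : ℤˣ) ^ (u.cycleType.sum + k) := by
    rw [Equiv.Perm.sign_of_cycleType]
  rw [hrep, Multiset.sum_replicate, smul_eq_mul] at hsgn
  have hsupp_le : u.support.card ≤ 6 := by
    have := Finset.card_le_univ u.support
    simpa using this
  have hkle : k ≤ 3 := by omega
  have hkodd : ¬ (k = 0 ∨ k = 2) := by
    rintro (h | h) <;> rw [h] at hsgn <;> rw [hsign] at hsgn <;> exact absurd hsgn.symm (by decide)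
  have hk3 : k = 1 ∨ k = 3 := by omega
  rcases hk3 with h | h
  · rw [← Equiv.Perm.card_support_eq_two]
    omega
  · exfalso
    obtain ⟨i, hi⟩ := hfix
    have : u.support = Finset.univ := by
      apply Finset.eq_univ_of_card
      simp only [Fintype.card_fin]; omega
    have : i ∈ u.support := this ▸ Finset.mem_univ i
    rw [Equiv.Perm.mem_support] at this
    exact this hi

lemma fpf_cycleType {u : G6} (h2 : u * u = 1) (hfpf : ∀ i, u i ≠ i) :
    u.cycleType = {2, 2, 2} := by
  have h1 : u ≠ 1 := by
    intro h; exact hfpf 0 (by rw [h]; rfl)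
  obtain ⟨hrep, hsum⟩ := invol_replicate h2 h1
  have hsupp : u.support = Finset.univ := by
    ext i; simp [Equiv.Perm.mem_support, hfpf i]
  rw [hsupp] at hsum
  simp only [Finset.card_univ, Fintype.card_fin] at hsum
  have : Multiset.card u.cycleType = 3 := by omega
  rw [this] at hrep
  rw [hrep]; rfl

lemma fpf_of_invol {u : G6} (h2 : u * u = 1) (h1 : u ≠ 1)
    (hsign : Equiv.Perm.sign u = -1) (hnswap : ¬ u.IsSwap) : ∀ i, u i ≠ i := by
  intro i hi
  exact hnswap (isSwap_of_invol h2 h1 hsign ⟨i, hi⟩)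

lemma fpf_isConj {u v : G6} (hu2 : u * u = 1) (hufpf : ∀ i, u i ≠ i)
    (hv2 : v * v = 1) (hvfpf : ∀ i, v i ≠ i) : IsConj u v := by
  rw [Equiv.Perm.isConj_iff_cycleType_eq, fpf_cycleType hu2 hufpf, fpf_cycleType hv2 hvfpf]

lemma swap_isConj {u v : G6} (hu : u.IsSwap) (hv : v.IsSwap) : IsConj u v := by
  rw [Equiv.Perm.isConj_iff_cycleType_eq]
  obtain ⟨a, b, hab, rfl⟩ := hu
  obtain ⟨c, d, hcd, rfl⟩ := hv
  rw [(Equiv.Perm.isCycle_swap hab).cycleType, (Equiv.Perm.isCycle_swap hcd).cycleType]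
  congr 1
  rw [Equiv.Perm.card_support_eq_two.mpr ⟨a,b,hab,rfl⟩, Equiv.Perm.card_support_eq_two.mpr ⟨c,d,hcd,rfl⟩]

lemma isSwap_of_isConj {u v : G6} (hu : u.IsSwap) (h : IsConj u v) : v.IsSwap := by
  rw [← Equiv.Perm.card_support_eq_two]
  rw [Equiv.Perm.isConj_iff_cycleType_eq] at h
  have := Equiv.Perm.sum_cycleType u
  have h2 := Equiv.Perm.sum_cycleType v
  rw [← h] at h2
  rw [Equiv.Perm.card_support_eq_two.mpr hu] at this
  omega

lemma d1 : ∀ i j : Fin 6, i ≠ 0 → j ≠ 0 → i ≠ j →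
    swap 0 i * swap 0 j ≠ swap 0 j * swap 0 i := by decide

lemma d2 (a b c d : Fin 6) (hac : a ≠ c) (had : a ≠ d) (hbc : b ≠ c) (hbd : b ≠ d) :
    swap a b * swap c d = swap c d * swap a b := by
  apply Equiv.Perm.Disjoint.commute
  intro x
  by_cases hxa : x = a
  · right; subst hxa; exact swap_apply_of_ne_of_ne hac had
  · by_cases hxb : x = b
    · right; subst hxb; exact swap_apply_of_ne_of_ne hbc hbd
    · left; exact swap_apply_of_ne_of_ne hxa hxb

lemma d3 : ∀ k : Fin 6, ∃ l : Fin 6, l ≠ 0 ∧ l ≠ 1 ∧ l ≠ 2 ∧ l ≠ k := by decide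

lemma common_point (a b : Fin 6 → Fin 6)
    (hab : ∀ i, i ≠ 0 → a i ≠ b i)
    (hmeet : ∀ i j, i ≠ 0 → j ≠ 0 → i ≠ j →
      a i = a j ∨ a i = b j ∨ b i = a j ∨ b i = b j)
    (hdist : ∀ i j, i ≠ 0 → j ≠ 0 → i ≠ j →
      ¬((a i = a j ∧ b i = b j) ∨ (a i = b j ∧ b i = a j))) :
    ∃ t, ∀ i, i ≠ 0 → (t = a i ∨ t = b i) := by
  set mem : Fin 6 → Fin 6 → Prop := fun t i => t = a i ∨ t = b i with hmemdef
  have eqpair : ∀ i, i ≠ 0 → ∀ t s, t ≠ s → mem t i → mem s i →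
      ((a i = t ∧ b i = s) ∨ (a i = s ∧ b i = t)) := by
    intro i hi t s hts ht hs
    rcases ht with h1 | h1 <;> rcases hs with h2 | h2 <;>
      first
        | (exact absurd (h1 ▸ h2 ▸ rfl : t = s) hts)
        | tauto
  have peq : ∀ i j, i ≠ 0 → j ≠ 0 → i ≠ j → ∀ t s, t ≠ s →
      mem t i → mem s i → mem t j → mem s j → False := by
    intro i j hi hj hij t s hts hti hsi htj hsj
    have e1 := eqpair i hi t s hts hti hsi
    have e2 := eqpair j hj t s hts htj hsj
    apply hdist i j hi hj hij
    rcases e1 with ⟨p1, q1⟩ | ⟨p1, q1⟩ <;> rcases e2 with ⟨p2, q2⟩ | ⟨p2, q2⟩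
    · exact Or.inl ⟨p1.trans p2.symm, q1.trans q2.symm⟩
    · exact Or.inr ⟨p1.trans q2.symm, q1.trans p2.symm⟩
    · exact Or.inr ⟨p1.trans q2.symm, q1.trans p2.symm⟩
    · exact Or.inl ⟨p1.trans p2.symm, q1.trans q2.symm⟩
  have meet_ex : ∀ i j, i ≠ 0 → j ≠ 0 → i ≠ j → ∃ s, mem s i ∧ mem s j := by
    intro i j hi hj hij
    rcases hmeet i j hi hj hij with h | h | h | h
    · exact ⟨a i, Or.inl rfl, Or.inl h⟩
    · exact ⟨a i, Or.inl rfl, Or.inr h⟩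
    · exact ⟨b i, Or.inr rfl, Or.inl h⟩
    · exact ⟨b i, Or.inr rfl, Or.inr h⟩
  have other : ∀ i, i ≠ 0 → ∀ t, mem t i → ∃ c, mem c i ∧ c ≠ t ∧
      (∀ s, mem s i → s = t ∨ s = c) := by
    intro i hi t ht
    rcases ht with h | h
    · refine ⟨b i, Or.inr rfl, ?_, ?_⟩
      · intro hc; exact hab i hi (hc.trans h).symm
      · intro s hs
        rcases hs with h2 | h2
        · left; rw [h2, ← h]
        · right; exact h2
    · refine ⟨a i, Or.inl rfl, ?_, ?_⟩
      · intro hc; exact hab i hi (hc.trans h)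
      · intro s hs
        rcases hs with h2 | h2
        · right; exact h2
        · left; rw [h2, ← h]
  have transfer : ∀ i j, i ≠ 0 → j ≠ 0 → i ≠ j → ∀ t c, c ≠ t →
      (∀ s, mem s i → s = t ∨ s = c) → ¬ mem t j → mem c j := by
    intro i j hi hj hij t c _ hcu htj
    obtain ⟨s, hsi, hsj⟩ := meet_ex i j hi hj hij
    rcases hcu s hsi with h | h
    · exact absurd (h ▸ hsj) htj
    · exact h ▸ hsj
  obtain ⟨t, ht1, ht2⟩ := meet_ex 1 2 (by decide) (by decide) (by decide)
  refine ⟨t, ?_⟩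
  by_contra hcon
  push_neg at hcon
  obtain ⟨k, hk0, hkt⟩ := hcon
  have hktm : ¬ mem t k := fun hm => hm.elim hkt.1 hkt.2
  have hk1 : k ≠ 1 := fun h => hktm (h ▸ ht1)
  have hk2 : k ≠ 2 := fun h => hktm (h ▸ ht2)
  obtain ⟨b1, hb1m, hb1t, hb1u⟩ := other 1 (by decide) t ht1
  obtain ⟨b2, hb2m, hb2t, hb2u⟩ := other 2 (by decide) t ht2
  have hb12 : b1 ≠ b2 := by
    intro h
    exact peq 1 2 (by decide) (by decide) (by decide) t b1 (Ne.symm hb1t) ht1 hb1m ht2 (h ▸ hb2m)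
  have hb1k : mem b1 k := transfer 1 k (by decide) hk0 (Ne.symm hk1) t b1 hb1t hb1u hktm
  have hb2k : mem b2 k := transfer 2 k (by decide) hk0 (Ne.symm hk2) t b2 hb2t hb2u hktm
  obtain ⟨l, hl0, hl1, hl2, hlk⟩ := d3 k
  by_cases htl : mem t l
  · obtain ⟨c, hcm, hct, hcu⟩ := other l hl0 t htl
    have hck : mem c k := transfer l k hl0 hk0 hlk t c hct hcu hktm
    have hcb : c = b1 ∨ c = b2 := by
      by_contra hc
      push_neg at hc
      rcases eqpair k hk0 b1 b2 hb12 hb1k hb2k with ⟨p, q⟩ | ⟨p, q⟩ <;>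
        rcases hck with h | h
      · exact hc.1 (h.trans p)
      · exact hc.2 (h.trans q)
      · exact hc.2 (h.trans p)
      · exact hc.1 (h.trans q)
    rcases hcb with h | h
    · exact peq 1 l (by decide) hl0 (Ne.symm hl1) t b1 (Ne.symm hb1t) ht1 hb1m htl (h ▸ hcm)
    · exact peq 2 l (by decide) hl0 (Ne.symm hl2) t b2 (Ne.symm hb2t) ht2 hb2m htl (h ▸ hcm)
  · have hb1l : mem b1 l := transfer 1 l (by decide) hl0 (Ne.symm hl1) t b1 hb1t hb1u htl
    have hb2l : mem b2 l := transfer 2 l (by decide) hl0 (Ne.symm hl2) t b2 hb2t hb2u htl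
    exact peq l k hl0 hk0 hlk b1 b2 hb12 hb1l hb2l hb1k hb2k

lemma swap_zero_inj {i j : Fin 6} (h : (swap 0 i : G6) = swap 0 j) : i = j := by
  have := congrArg (fun σ : G6 => σ 0) h
  simpa using this

lemma inner_of_swap_preserving (ψ : MulAut G6)
    (h : ∀ s : G6, s.IsSwap → (ψ s).IsSwap) : ∃ g : G6, ∀ x, ψ x = g * x * g⁻¹ := by
  have H : ∀ i : Fin 6, ∃ ab : Fin 6 × Fin 6, ab.1 ≠ ab.2 ∧
      (i ≠ 0 → ψ (swap 0 i) = swap ab.1 ab.2) := by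
    intro i
    by_cases hi : i = 0
    · exact ⟨(0, 1), by decide, fun h' => absurd hi h'⟩
    · obtain ⟨x, y, hxy, hs⟩ := h (swap 0 i) ⟨0, i, Ne.symm hi, rfl⟩
      exact ⟨(x, y), hxy, fun _ => hs⟩
  choose ab hab hψs using H
  set a : Fin 6 → Fin 6 := fun i => (ab i).1 with ha
  set b : Fin 6 → Fin 6 := fun i => (ab i).2 with hb
  -- injectivity on swaps
  have hinj : ∀ i j, i ≠ 0 → j ≠ 0 → ψ (swap 0 i) = ψ (swap 0 j) → i = j := by
    intro i j hi hj he
    exact swap_zero_inj (ψ.injective he)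
  have hmeet : ∀ i j, i ≠ 0 → j ≠ 0 → i ≠ j →
      a i = a j ∨ a i = b j ∨ b i = a j ∨ b i = b j := by
    intro i j hi hj hij
    by_contra hc
    push_neg at hc
    obtain ⟨h1, h2, h3, h4⟩ := hc
    have hcomm : swap (a i) (b i) * swap (a j) (b j)
        = swap (a j) (b j) * swap (a i) (b i) := d2 _ _ _ _ h1 h2 h3 h4
    rw [← hψs i hi, ← hψs j hj, ← map_mul, ← map_mul] at hcomm
    exact d1 i j hi hj hij (ψ.injective hcomm)
  have hdist : ∀ i j, i ≠ 0 → j ≠ 0 → i ≠ j →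
      ¬((a i = a j ∧ b i = b j) ∨ (a i = b j ∧ b i = a j)) := by
    intro i j hi hj hij hc
    apply hij
    apply hinj i j hi hj
    rw [hψs i hi, hψs j hj]
    show swap (a i) (b i) = swap (a j) (b j)
    rcases hc with ⟨p, q⟩ | ⟨p, q⟩
    · rw [p, q]
    · rw [p, q, swap_comm]
  obtain ⟨t, hts⟩ := common_point a b (fun i hi => hab i) hmeet hdist
  -- partner function
  set c : Fin 6 → Fin 6 := fun i => if a i = t then b i else a i with hc
  have hcs : ∀ i, i ≠ 0 → ψ (swap 0 i) = swap t (c i) := by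
    intro i hi
    rw [hψs i hi]
    show swap (a i) (b i) = swap t (c i)
    by_cases h' : a i = t
    · have hci : c i = b i := if_pos h'
      rw [hci, h']
    · have hci : c i = a i := if_neg h'
      rcases hts i hi with h2 | h2
      · exact absurd h2.symm h'
      · rw [hci, ← h2, swap_comm]
  have hct : ∀ i, i ≠ 0 → c i ≠ t := by
    intro i hi
    by_cases h' : a i = t
    · have hci : c i = b i := if_pos h'
      rw [hci]
      intro h2
      exact hab i (h'.trans h2.symm)
    · have hci : c i = a i := if_neg h'
      rw [hci]
      exact h'
  have hcinj : ∀ i j, i ≠ 0 → j ≠ 0 → c i = c j → i = j := by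
    intro i j hi hj he
    apply hinj i j hi hj
    rw [hcs i hi, hcs j hj, he]
  -- build g
  set f : Fin 6 → Fin 6 := fun i => if i = 0 then t else c i with hf
  have hfinj : Function.Injective f := by
    intro i j he
    rw [hf] at he
    by_cases hi : i = 0 <;> by_cases hj : j = 0
    · rw [hi, hj]
    · simp only [if_pos hi, if_neg hj] at he
      exact absurd he.symm (hct j hj)
    · simp only [if_neg hi, if_pos hj] at he
      exact absurd he (hct i hi)
    · simp only [if_neg hi, if_neg hj] at he
      exact hcinj i j hi hj he
  set g : G6 := Equiv.ofBijective f (Finite.injective_iff_bijective.mp hfinj) with hg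
  have hgap : ∀ i, g i = f i := fun i => rfl
  have hg0 : g 0 = t := by rw [hgap, hf]; simp
  have hgi : ∀ i, i ≠ 0 → g i = c i := by
    intro i hi; rw [hgap, hf]; simp [hi]
  have hkey : ∀ i, i ≠ 0 → ψ (swap 0 i) = g * swap 0 i * g⁻¹ := by
    intro i hi
    rw [← Equiv.swap_apply_apply, hg0, hgi i hi]
    exact hcs i hi
  have hallswap : ∀ x y : Fin 6, x ≠ y → ψ (swap x y) = g * swap x y * g⁻¹ := by
    intro x y hxy
    by_cases hx : x = 0
    · rw [hx]; exact hkey y (fun h => hxy (hx.trans h.symm))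
    · by_cases hy : y = 0
      · rw [hy, swap_comm]
        exact hkey x hx
      · have hrepr : swap x y = swap 0 x * swap 0 y * (swap 0 x)⁻¹ := by
          rw [← Equiv.swap_apply_apply]
          rw [swap_apply_left, swap_apply_of_ne_of_ne hy (Ne.symm hxy)]
        rw [hrepr, map_mul, map_mul, map_inv]
        rw [hkey x hx, hkey y hy]
        group
  obtain ⟨g, hgall⟩ : ∃ g : G6, ∀ x y : Fin 6, x ≠ y → ψ (swap x y) = g * swap x y * g⁻¹ :=
    ⟨g, hallswap⟩
  refine ⟨g, ?_⟩
  intro x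
  refine Equiv.Perm.swap_induction_on x (by simp) ?_
  intro f x y hxy ih
  rw [map_mul, ih, hgall x y hxy]
  group

lemma cycleType_formPerm (l : List (Fin 6)) (h : l.Nodup) (h2 : 2 ≤ l.length) :
    (l.formPerm).cycleType = {l.length} := by
  rw [(List.isCycle_formPerm h h2).cycleType]
  have hne : ∀ x : Fin 6, l ≠ [x] := by
    intro x hx
    rw [hx] at h2; simp at h2
  rw [List.support_formPerm_of_nodup l h hne, List.toFinset_card_of_nodup h]

lemma cycleType_swap' {x y : Fin 6} (h : x ≠ y) : (swap x y : G6).cycleType = {2} := by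
  rw [(Equiv.Perm.isCycle_swap h).cycleType, Equiv.Perm.card_support_eq_two.mpr ⟨x, y, h, rfl⟩]

lemma cycleType_mul_disjoint {σ τ : G6} (h : ∀ x, σ x = x ∨ τ x = x) :
    (σ * τ).cycleType = σ.cycleType + τ.cycleType :=
  Equiv.Perm.Disjoint.cycleType_mul h

-- concrete witnesses
lemma wit22 : (swap 0 1 * swap 2 3 : G6).cycleType = {2, 2} := by
  rw [cycleType_mul_disjoint (by decide), cycleType_swap' (by decide), cycleType_swap' (by decide)]
  rfl

lemma wit22' : (swap 0 1 * swap 2 4 : G6).cycleType = {2, 2} := by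
  rw [cycleType_mul_disjoint (by decide), cycleType_swap' (by decide), cycleType_swap' (by decide)]
  rfl

lemma wit4 : (([0,1,2,3] : List (Fin 6)).formPerm).cycleType = {4} :=
  cycleType_formPerm _ (by decide) (by decide)

lemma wit5 : (([0,1,2,3,4] : List (Fin 6)).formPerm).cycleType = {5} :=
  cycleType_formPerm _ (by decide) (by decide)

lemma wit5' : (([0,1,2,3,5] : List (Fin 6)).formPerm).cycleType = {5} :=
  cycleType_formPerm _ (by decide) (by decide)

lemma wit6 : (([0,1,2,3,4,5] : List (Fin 6)).formPerm).cycleType = {6} :=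
  cycleType_formPerm _ (by decide) (by decide)

lemma wit6' : (([0,1,2,3,5,4] : List (Fin 6)).formPerm).cycleType = {6} :=
  cycleType_formPerm _ (by decide) (by decide)

lemma wit23 : (swap 0 1 * ([2,3,4] : List (Fin 6)).formPerm).cycleType = {2, 3} := by
  rw [cycleType_mul_disjoint (by decide), cycleType_swap' (by decide),
    cycleType_formPerm _ (by decide) (by decide)]
  rfl

lemma wit23' : (swap 0 1 * ([2,3,5] : List (Fin 6)).formPerm).cycleType = {2, 3} := by
  rw [cycleType_mul_disjoint (by decide), cycleType_swap' (by decide),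
    cycleType_formPerm _ (by decide) (by decide)]
  rfl

lemma wit24 : (swap 0 1 * ([2,3,4,5] : List (Fin 6)).formPerm).cycleType = {2, 4} := by
  rw [cycleType_mul_disjoint (by decide), cycleType_swap' (by decide),
    cycleType_formPerm _ (by decide) (by decide)]
  rfl

lemma wit33 : (([0,1,2] : List (Fin 6)).formPerm * ([3,4,5] : List (Fin 6)).formPerm).cycleType
    = {3, 3} := by
  rw [cycleType_mul_disjoint (by decide), cycleType_formPerm _ (by decide) (by decide),
    cycleType_formPerm _ (by decide) (by decide)]
  rfl

lemma wit33' : (([0,1,2] : List (Fin 6)).formPerm * ([3,5,4] : List (Fin 6)).formPerm).cycleType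
    = {3, 3} := by
  rw [cycleType_mul_disjoint (by decide), cycleType_formPerm _ (by decide) (by decide),
    cycleType_formPerm _ (by decide) (by decide)]
  rfl

lemma wit222 : ((swap 0 1 * swap 2 3) * swap 4 5 : G6).cycleType = {2, 2, 2} := by
  rw [cycleType_mul_disjoint (by decide), wit22, cycleType_swap' (by decide)]
  rfl

lemma wit222' : ((swap 0 1 * swap 2 4) * swap 3 5 : G6).cycleType = {2, 2, 2} := by
  rw [cycleType_mul_disjoint (by decide), wit22', cycleType_swap' (by decide)]
  rfl

section
variable {K : Subgroup G6} (hN : K.Normal)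

include hN in
lemma mem_of_cycleType_eq {x y : G6} (hx : x ∈ K) (hxy : y.cycleType = x.cycleType) :
    y ∈ K := by
  have hconj : IsConj x y := Equiv.Perm.isConj_iff_cycleType_eq.mpr hxy.symm
  obtain ⟨c, hc⟩ := isConj_iff.mp hconj
  rw [← hc]
  exact hN.conj_mem x hx c

include hN in
lemma card_ge_of_three_cycle {w : G6} (hw : w ∈ K) (h3 : w.cycleType = {3}) :
    360 ≤ Nat.card K := by
  have hA : alternatingGroup (Fin 6) ≤ K := by
    rw [← Equiv.Perm.closure_three_cycles_eq_alternating]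
    apply (Subgroup.closure_le _).mpr
    intro σ hσ
    exact mem_of_cycleType_eq hN hw (hσ.trans h3.symm)
  have hcard := Subgroup.card_le_of_le hA
  have h360 : Nat.card (alternatingGroup (Fin 6)) = 360 := by
    have h2 := two_mul_card_alternatingGroup (α := Fin 6)
    rw [Fintype.card_perm] at h2
    simp only [Fintype.card_fin] at h2
    have h720 : Nat.factorial 6 = 720 := by decide
    rw [h720] at h2
    rw [Nat.card_eq_fintype_card]
    omega
  exact le_trans (le_of_eq h360.symm) hcard

include hN in
lemma card_ge_of_swap {w : G6} (hw : w ∈ K) (h2 : w.cycleType = {2}) :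
    720 ≤ Nat.card K := by
  have hA : (⊤ : Subgroup G6) ≤ K := by
    rw [← Equiv.Perm.closure_isSwap]
    apply (Subgroup.closure_le _).mpr
    intro σ hσ
    obtain ⟨x, y, hxy, rfl⟩ := hσ
    exact mem_of_cycleType_eq hN hw ((cycleType_swap' hxy).trans h2.symm)
  have hcard := Subgroup.card_le_of_le hA
  have h720 : Nat.card (⊤ : Subgroup G6) = 720 := by
    rw [Subgroup.card_top, Nat.card_eq_fintype_card, Fintype.card_perm]
    simp only [Fintype.card_fin]
    decide
  exact le_trans (le_of_eq h720.symm) hcard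

include hN in
lemma card_ge_of_22 {w : G6} (hw : w ∈ K) (h22 : w.cycleType = {2, 2}) :
    360 ≤ Nat.card K := by
  have hy1 : (swap 0 1 * swap 2 3 : G6) ∈ K :=
    mem_of_cycleType_eq hN hw (wit22.trans h22.symm)
  have hy2 : (swap 0 1 * swap 2 4 : G6) ∈ K :=
    mem_of_cycleType_eq hN hw (wit22'.trans h22.symm)
  have hz : ((swap 0 1 * swap 2 3) * (swap 0 1 * swap 2 4) : G6) ∈ K := K.mul_mem hy1 hy2
  have heq : ((swap 0 1 * swap 2 3) * (swap 0 1 * swap 2 4) : G6)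
      = swap 2 3 * swap 2 4 := by decide
  rw [heq] at hz
  exact card_ge_of_three_cycle hN hz
    (Equiv.Perm.isThreeCycle_swap_mul_swap_same (by decide) (by decide) (by decide)).cycleType

end

lemma enum_cycleType : ∀ (τ : Multiset ℕ), (∀ n ∈ τ, 2 ≤ n) → τ.sum ≤ 6 →
    τ = 0 ∨ τ = {2} ∨ τ = {3} ∨ τ = {4} ∨ τ = {5} ∨ τ = {6} ∨
    τ = {2,2} ∨ τ = {2,3} ∨ τ = {2,4} ∨ τ = {3,3} ∨ τ = {2,2,2} := by
  intro τ
  induction τ using Multiset.induction_on with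
  | empty => intro _ _; left; rfl
  | cons a s ih =>
    intro h2 h6
    have ha2 : 2 ≤ a := h2 a (Multiset.mem_cons_self a s)
    have hs2 : ∀ n ∈ s, 2 ≤ n := fun n hn => h2 n (Multiset.mem_cons_of_mem hn)
    have hsum : a + s.sum ≤ 6 := by rw [← Multiset.sum_cons]; exact h6
    have hss : s.sum ≤ 6 := by omega
    rcases ih hs2 hss with h | h | h | h | h | h | h | h | h | h | h <;> subst h <;>
      simp only [Multiset.sum_zero, Multiset.insert_eq_cons, Multiset.sum_cons,
        Multiset.sum_singleton] at hsum <;>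
      (try omega) <;>
      (have ha6 : a ≤ 6 := by omega) <;>
      (interval_cases a <;> first | omega | decide)

lemma normal_eq_bot_of_card_le (K : Subgroup G6) (hN : K.Normal)
    (hle : Nat.card K ≤ 120) : K = ⊥ := by
  by_contra hbot
  obtain ⟨⟨x, hxK⟩, hx1⟩ := Subgroup.ne_bot_iff_exists_ne_one.mp hbot
  have hx1' : x ≠ 1 := by
    intro h; exact hx1 (Subtype.ext h)
  have h2 : ∀ n ∈ x.cycleType, 2 ≤ n := fun n hn => Equiv.Perm.two_le_of_mem_cycleType hn
  have h6 : x.cycleType.sum ≤ 6 := by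
    rw [Equiv.Perm.sum_cycleType]
    have := Finset.card_le_univ x.support
    simpa using this
  have hτ0 : x.cycleType ≠ 0 := fun h => hx1' (Equiv.Perm.cycleType_eq_zero.mp h)
  rcases enum_cycleType x.cycleType h2 h6 with h | h | h | h | h | h | h | h | h | h | h
  · exact hτ0 h
  · have := card_ge_of_swap hN hxK h; omega
  · have := card_ge_of_three_cycle hN hxK h; omega
  · -- {4}
    have hy : (([0,1,2,3] : List (Fin 6)).formPerm) ∈ K :=
      mem_of_cycleType_eq hN hxK (wit4.trans h.symm)
    have hz : (([0,1,2,3] : List (Fin 6)).formPerm * ([0,1,2,3] : List (Fin 6)).formPerm) ∈ K :=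
      K.mul_mem hy hy
    have heq : (([0,1,2,3] : List (Fin 6)).formPerm * ([0,1,2,3] : List (Fin 6)).formPerm)
        = swap 0 2 * swap 1 3 := by decide
    rw [heq] at hz
    have h22 : (swap 0 2 * swap 1 3 : G6).cycleType = {2,2} := by
      rw [cycleType_mul_disjoint (by decide), cycleType_swap' (by decide),
        cycleType_swap' (by decide)]
      rfl
    have := card_ge_of_22 hN hz h22; omega
  · -- {5}
    have hy1 : (([0,1,2,3,4] : List (Fin 6)).formPerm) ∈ K :=
      mem_of_cycleType_eq hN hxK (wit5.trans h.symm)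
    have hy2 : (([0,1,2,3,5] : List (Fin 6)).formPerm) ∈ K :=
      mem_of_cycleType_eq hN hxK (wit5'.trans h.symm)
    have hz := K.mul_mem (K.inv_mem hy1) hy2
    have heq : (([0,1,2,3,4] : List (Fin 6)).formPerm⁻¹ * ([0,1,2,3,5] : List (Fin 6)).formPerm)
        = swap 3 4 * swap 3 5 := by decide
    rw [heq] at hz
    have := card_ge_of_three_cycle hN hz
      (Equiv.Perm.isThreeCycle_swap_mul_swap_same (by decide) (by decide) (by decide)).cycleType
    omega
  · -- {6}
    have hy1 : (([0,1,2,3,4,5] : List (Fin 6)).formPerm) ∈ K :=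
      mem_of_cycleType_eq hN hxK (wit6.trans h.symm)
    have hy2 : (([0,1,2,3,5,4] : List (Fin 6)).formPerm) ∈ K :=
      mem_of_cycleType_eq hN hxK (wit6'.trans h.symm)
    have hz := K.mul_mem (K.inv_mem hy1) hy2
    have heq : (([0,1,2,3,4,5] : List (Fin 6)).formPerm⁻¹ * ([0,1,2,3,5,4] : List (Fin 6)).formPerm)
        = swap 3 5 * swap 3 4 := by decide
    rw [heq] at hz
    have := card_ge_of_three_cycle hN hz
      (Equiv.Perm.isThreeCycle_swap_mul_swap_same (by decide) (by decide) (by decide)).cycleType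
    omega
  · have := card_ge_of_22 hN hxK h; omega
  · -- {2,3}
    have hy1 : (swap 0 1 * ([2,3,4] : List (Fin 6)).formPerm) ∈ K :=
      mem_of_cycleType_eq hN hxK (wit23.trans h.symm)
    have hy2 : (swap 0 1 * ([2,3,5] : List (Fin 6)).formPerm) ∈ K :=
      mem_of_cycleType_eq hN hxK (wit23'.trans h.symm)
    have hz := K.mul_mem (K.inv_mem hy1) hy2
    have heq : ((swap 0 1 * ([2,3,4] : List (Fin 6)).formPerm)⁻¹
        * (swap 0 1 * ([2,3,5] : List (Fin 6)).formPerm)) = swap 3 4 * swap 3 5 := by decide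
    rw [heq] at hz
    have := card_ge_of_three_cycle hN hz
      (Equiv.Perm.isThreeCycle_swap_mul_swap_same (by decide) (by decide) (by decide)).cycleType
    omega
  · -- {2,4}
    have hy : (swap 0 1 * ([2,3,4,5] : List (Fin 6)).formPerm) ∈ K :=
      mem_of_cycleType_eq hN hxK (wit24.trans h.symm)
    have hz := K.mul_mem hy hy
    have heq : ((swap 0 1 * ([2,3,4,5] : List (Fin 6)).formPerm)
        * (swap 0 1 * ([2,3,4,5] : List (Fin 6)).formPerm)) = swap 2 4 * swap 3 5 := by decide
    rw [heq] at hz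
    have h22 : (swap 2 4 * swap 3 5 : G6).cycleType = {2,2} := by
      rw [cycleType_mul_disjoint (by decide), cycleType_swap' (by decide),
        cycleType_swap' (by decide)]
      rfl
    have := card_ge_of_22 hN hz h22; omega
  · -- {3,3}
    have hy1 : (([0,1,2] : List (Fin 6)).formPerm * ([3,4,5] : List (Fin 6)).formPerm) ∈ K :=
      mem_of_cycleType_eq hN hxK (wit33.trans h.symm)
    have hy2 : (([0,1,2] : List (Fin 6)).formPerm * ([3,5,4] : List (Fin 6)).formPerm) ∈ K :=
      mem_of_cycleType_eq hN hxK (wit33'.trans h.symm)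
    have hz := K.mul_mem (K.inv_mem hy1) hy2
    have heq : ((([0,1,2] : List (Fin 6)).formPerm * ([3,4,5] : List (Fin 6)).formPerm)⁻¹
        * (([0,1,2] : List (Fin 6)).formPerm * ([3,5,4] : List (Fin 6)).formPerm))
        = swap 3 5 * swap 3 4 := by decide
    rw [heq] at hz
    have := card_ge_of_three_cycle hN hz
      (Equiv.Perm.isThreeCycle_swap_mul_swap_same (by decide) (by decide) (by decide)).cycleType
    omega
  · -- {2,2,2}
    have hy1 : ((swap 0 1 * swap 2 3) * swap 4 5 : G6) ∈ K :=
      mem_of_cycleType_eq hN hxK (wit222.trans h.symm)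
    have hy2 : ((swap 0 1 * swap 2 4) * swap 3 5 : G6) ∈ K :=
      mem_of_cycleType_eq hN hxK (wit222'.trans h.symm)
    have hz := K.mul_mem hy1 hy2
    have heq : (((swap 0 1 * swap 2 3) * swap 4 5) * ((swap 0 1 * swap 2 4) * swap 3 5) : G6)
        = swap 2 5 * swap 3 4 := by decide
    rw [heq] at hz
    have h22 : (swap 2 5 * swap 3 4 : G6).cycleType = {2,2} := by
      rw [cycleType_mul_disjoint (by decide), cycleType_swap' (by decide),
        cycleType_swap' (by decide)]
      rfl
    have := card_ge_of_22 hN hz h22; omega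

lemma card_G6 : Nat.card G6 = 720 := by
  rw [Nat.card_eq_fintype_card, Fintype.card_perm]
  simp only [Fintype.card_fin]
  decide

instance : MulAction.IsPretransitive G6 (Fin 6) :=
  ⟨fun x y => ⟨swap x y, by simp⟩⟩

lemma card_stabilizer (i : Fin 6) : Nat.card (MulAction.stabilizer G6 i) = 120 := by
  have hidx : (MulAction.stabilizer G6 i).index = 6 := by
    rw [MulAction.index_stabilizer_of_transitive]
    simp
  have := Subgroup.index_mul_card (MulAction.stabilizer G6 i)
  rw [hidx, card_G6] at this
  omega

/-- For `T` of order 120, there is an automorphism `ψ` and point `p` with `ψ(T) ≤ Stab p`. -/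
lemma exists_aut_fixing (T : Subgroup G6) (hT : Nat.card T = 120) :
    ∃ (ψ : MulAut G6) (p : Fin 6), ∀ t ∈ T, (ψ t) p = p := by
  classical
  set ρ := MulAction.toPermHom G6 (G6 ⧸ T) with hρ
  have hker : ρ.ker = ⊥ := by
    rw [← Subgroup.normalCore_eq_ker]
    apply normal_eq_bot_of_card_le _ T.normalCore_normal
    have := Subgroup.card_le_of_le T.normalCore_le
    omega
  have hinj : Function.Injective ρ := (MonoidHom.ker_eq_bot_iff ρ).mp hker
  have hq6 : Nat.card (G6 ⧸ T) = 6 := by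
    have := Subgroup.card_eq_card_quotient_mul_card_subgroup T
    rw [card_G6, hT] at this
    omega
  obtain ⟨e⟩ : Nonempty ((G6 ⧸ T) ≃ Fin 6) := ⟨Finite.equivFinOfCardEq hq6⟩
  set ψf : G6 →* G6 :=
    { toFun := fun x => e.permCongr (ρ x)
      map_one' := by ext q; simp
      map_mul' := by intro x y; ext q; simp } with hψf
  have hψinj : Function.Injective ψf := by
    intro x y hxy
    apply hinj
    exact e.permCongr.injective hxy
  set ψ : MulAut G6 := MulEquiv.ofBijective ψf (Finite.injective_iff_bijective.mp hψinj) with hψ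
  refine ⟨ψ, e ((1 : G6) : G6 ⧸ T), ?_⟩
  intro t ht
  have happ : ψ t = e.permCongr (ρ t) := rfl
  rw [happ]
  simp only [Equiv.permCongr_apply, Equiv.symm_apply_apply]
  congr 1
  show t • ((1 : G6) : G6 ⧸ T) = _
  rw [MulAction.Quotient.smul_mk]
  rw [QuotientGroup.eq]
  simpa using ht

lemma notswap_of_not_inner (χ : MulAut G6) (h : ¬ ∃ g : G6, ∀ x, χ x = g * x * g⁻¹) :
    ∀ s : G6, s.IsSwap → ¬ (χ s).IsSwap := by
  intro s hs hχs
  apply h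
  apply inner_of_swap_preserving
  intro s' hs'
  obtain ⟨c, hc⟩ := isConj_iff.mp (swap_isConj hs hs')
  have heq : χ s' = χ c * χ s * (χ c)⁻¹ := by rw [← map_inv, ← map_mul, ← map_mul, hc]
  exact isSwap_of_isConj hχs (isConj_iff.mpr ⟨χ c, heq.symm⟩)

lemma swap_facts {u v : Fin 6} (huv : u ≠ v) :
    (swap u v : G6) * swap u v = 1 ∧ (swap u v : G6) ≠ 1 ∧
      Equiv.Perm.sign (swap u v : G6) = -1 := by
  refine ⟨Equiv.swap_mul_self u v, ?_, Equiv.Perm.sign_swap huv⟩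
  intro h
  have := congrArg (fun σ : G6 => σ u) h
  simp at this
  exact huv this.symm

/-- If `φ` is an outer automorphism of `S_6` and `T ≤ S_6` has order `120`, then exactly one of
`T` and `φ(T)` has a fixed point in `{0,…,5}`. -/
theorem stmt13 (φ : MulAut (Equiv.Perm (Fin 6)))
    (houter : ¬ ∃ g : Equiv.Perm (Fin 6), ∀ x, φ x = g * x * g⁻¹)
    (T : Subgroup (Equiv.Perm (Fin 6))) (hT : Nat.card T = 120) :
    Xor' (∃ i : Fin 6, ∀ t ∈ T, t i = i)
      (∃ i : Fin 6, ∀ t ∈ Subgroup.map φ.toMonoidHom T, t i = i) := by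
  by_cases hA : ∃ i : Fin 6, ∀ t ∈ T, t i = i
  · -- T has a fixed point; show φ(T) has none
    left
    refine ⟨hA, ?_⟩
    rintro ⟨j, hj⟩
    obtain ⟨i, hi⟩ := hA
    -- T = Stab i
    have hTle : T ≤ MulAction.stabilizer G6 i := by
      intro t ht
      rw [MulAction.mem_stabilizer_iff, Equiv.Perm.smul_def]
      exact hi t ht
    have hTeq : T = MulAction.stabilizer G6 i :=
      Subgroup.eq_of_le_of_card_ge hTle (by rw [card_stabilizer, hT])
    -- φ preserves swaps
    have hswap_pres : ∀ s : G6, s.IsSwap → (φ s).IsSwap := by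
      rintro s ⟨u, v, huv, rfl⟩
      obtain ⟨w, hwu, hwv⟩ :=
        (by decide : ∀ u v : Fin 6, ∃ w, w ≠ u ∧ w ≠ v) u v
      set k : G6 := swap i w with hk
      have hki : k i = w := Equiv.swap_apply_left i w
      have hkw : k w = i := Equiv.swap_apply_right i w
      have hkinv : k⁻¹ = k := Equiv.swap_inv i w
      have hfixi : (k⁻¹ * swap u v * k) i = i := by
        rw [hkinv]
        simp only [Equiv.Perm.mul_apply]
        rw [hki, Equiv.swap_apply_of_ne_of_ne hwu hwv, hkw]
      have hmem : k⁻¹ * swap u v * k ∈ T := by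
        rw [hTeq, MulAction.mem_stabilizer_iff, Equiv.Perm.smul_def]
        exact hfixi
      have hφmem : φ (k⁻¹ * swap u v * k) ∈ Subgroup.map φ.toMonoidHom T :=
        ⟨_, hmem, rfl⟩
      have hfixj := hj _ hφmem
      obtain ⟨h2, h1, hsgn⟩ := swap_facts huv
      apply isSwap_of_invol (by rw [← map_mul, h2, map_one])
        (fun h => h1 (by apply φ.injective; rw [h, map_one]))
        (by rw [sign_mulAut φ, hsgn])
      refine ⟨φ k j, ?_⟩
      have hrep : (swap u v : G6) = k * (k⁻¹ * swap u v * k) * k⁻¹ := by group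
      rw [hrep, map_mul, map_mul, map_inv]
      simp only [Equiv.Perm.mul_apply]
      rw [show ∀ (σ : G6) x, σ⁻¹ (σ x) = x from fun σ x => σ.symm_apply_apply x, hfixj]
    obtain ⟨g, hg⟩ := inner_of_swap_preserving φ hswap_pres
    exact houter ⟨g, hg⟩
  · -- T has no fixed point; show φ(T) has one
    right
    refine ⟨?_, hA⟩
    push_neg at hA
    obtain ⟨ψ, p, hψp⟩ := exists_aut_fixing T hT
    have hψnotinner : ¬ ∃ g : G6, ∀ x, ψ x = g * x * g⁻¹ := by
      rintro ⟨g, hg⟩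
      obtain ⟨t, htT, htne⟩ := hA (g⁻¹ p)
      apply htne
      have h1 := hψp t htT
      rw [hg t] at h1
      simp only [Equiv.Perm.mul_apply] at h1
      have : g (t (g⁻¹ p)) = g (g⁻¹ p) := by
        rw [h1, show ∀ (σ : G6) x, σ (σ⁻¹ x) = x from fun σ x => σ.apply_symm_apply x]
      exact g.injective this
    have hψnotswap := notswap_of_not_inner ψ hψnotinner
    have hφnotswap := notswap_of_not_inner φ houter
    -- key: φ ∘ ψ⁻¹ preserves swaps
    have key : ∀ s : G6, s.IsSwap → (φ (ψ.symm s)).IsSwap := by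
      intro s hs
      obtain ⟨u, v, huv, rfl⟩ := hs
      obtain ⟨hs2, hs1, hssgn⟩ := swap_facts huv
      set s : G6 := swap u v
      set w : G6 := ψ.symm s with hw
      have hw2 : w * w = 1 := by rw [hw, ← map_mul, hs2, map_one]
      have hw1 : w ≠ 1 := fun h => hs1 (by
        have := congrArg (fun z => ψ z) h
        simpa [hw] using this)
      have hwsgn : Equiv.Perm.sign w = -1 := by
        rw [hw, sign_mulAut ψ.symm, hssgn]
      have hwnotswap : ¬ w.IsSwap := by
        intro hwsw
        exact hψnotswap w hwsw (by rw [hw]; simpa using ⟨u, v, huv, rfl⟩)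
      have hwfpf : ∀ i, w i ≠ i := fpf_of_invol hw2 hw1 hwsgn hwnotswap
      by_contra hc
      have hφw2 : φ w * φ w = 1 := by rw [← map_mul, hw2, map_one]
      have hφw1 : φ w ≠ 1 := fun h => hw1 (by apply φ.injective; rw [h, map_one])
      have hφwsgn : Equiv.Perm.sign (φ w) = -1 := by rw [sign_mulAut φ, hwsgn]
      have hφwfpf : ∀ i, (φ w) i ≠ i := fpf_of_invol hφw2 hφw1 hφwsgn hc
      -- counting contradiction
      set S : Set G6 := {u : G6 | u.IsSwap} with hS
      set F : Set G6 := {u : G6 | u * u = 1 ∧ ∀ i, u i ≠ i} with hF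
      have himg : ∀ x ∈ S ∪ F, φ x ∈ F := by
        rintro x (hx | hx)
        · obtain ⟨a, b, hab, rfl⟩ := hx
          obtain ⟨g2, g1, gsgn⟩ := swap_facts hab
          have hh2 : φ (swap a b) * φ (swap a b) = 1 := by rw [← map_mul, g2, map_one]
          have hh1 : φ (swap a b) ≠ 1 := fun h => g1 (by apply φ.injective; rw [h, map_one])
          have hhsgn : Equiv.Perm.sign (φ (swap a b)) = -1 := by rw [sign_mulAut φ, gsgn]
          exact ⟨hh2, fpf_of_invol hh2 hh1 hhsgn (hφnotswap _ ⟨a, b, hab, rfl⟩)⟩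
        · obtain ⟨hx2, hxfpf⟩ := hx
          obtain ⟨c, hc2⟩ := isConj_iff.mp (fpf_isConj hx2 hxfpf hw2 hwfpf)
          -- c * x * c⁻¹ = w, so x = c⁻¹ * w * c
          have hxw : x = c⁻¹ * w * c := by
            rw [← hc2]; group
          constructor
          · rw [← map_mul, hx2, map_one]
          · intro i hfix
            apply hφwfpf (φ c i)
            have : φ x = (φ c)⁻¹ * φ w * φ c := by
              rw [hxw, map_mul, map_mul, map_inv]
            rw [this] at hfix
            simp only [Equiv.Perm.mul_apply] at hfix
            have := congrArg (fun z => φ c z) hfix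
            simpa using this
      have hinjOn : Set.InjOn φ (S ∪ F) := φ.injective.injOn
      have h1 : (S ∪ F).ncard = (φ '' (S ∪ F)).ncard :=
        (Set.ncard_image_of_injOn hinjOn).symm
      have h2 : (φ '' (S ∪ F)).ncard ≤ F.ncard :=
        Set.ncard_le_ncard (by rintro _ ⟨x, hx, rfl⟩; exact himg x hx) F.toFinite
      have h3 : F.ncard < (S ∪ F).ncard := by
        apply Set.ncard_lt_ncard _ (S ∪ F).toFinite
        constructor
        · exact Set.subset_union_right
        · intro hsub
          have hmem : (swap 0 1 : G6) ∈ S ∪ F :=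
            Or.inl ⟨0, 1, by decide, rfl⟩
          have := hsub hmem
          rw [hF] at this
          exact this.2 2 (by decide)
      omega
    obtain ⟨g, hg⟩ := inner_of_swap_preserving (ψ.symm.trans φ) (fun s hs => key s hs)
    refine ⟨g p, ?_⟩
    rintro t' ⟨t, htT, rfl⟩
    have hφt : φ.toMonoidHom t = (ψ.symm.trans φ) (ψ t) := by
      simp
    rw [hφt, hg (ψ t)]
    simp only [Equiv.Perm.mul_apply]
    rw [show ∀ (σ : G6) x, σ⁻¹ (σ x) = x from fun σ x => σ.symm_apply_apply x, hψp t htT]
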